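/- Let G be a clique expansion C_p[k_1, …, k_p] of an odd cycle of length p ≥ 7. Then G contains K_5 as a subgraph, or G contains as a subgraph a clique expansion C_p[2, 2, …, 2, 1, 3, 1, 3, …, 1] (a copies of 2, then a 1, then b consecutive pairs 3,1, where a + 2b = p − 1) or the clique expansion C_p[2, 2, …, 2, 1] (p − 1 copies of 2 followed by a 1), or G is 4-colorable. -/

import Mathlib

open SimpleGraph Finset

/-- The cycle graph on `Fin p` (for `p ≥ 3` this is the cycle `C_p`). -/
def cycleG (p : ℕ) [NeZero p] : SimpleGraph (Fin p) where
  Adj i j := i ≠ j ∧ (i + 1 = j ∨ j + 1 = i)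
  symm := by
    constructor
    rintro i j ⟨h, h'⟩
    exact ⟨h.symm, h'.symm⟩
  loopless := by
    constructor
    rintro i ⟨h, _⟩
    exact h rfl

/-- The clique expansion `C_p[k 0, …, k (p-1)]` of the cycle `C_p`:
vertices of the cycle are replaced by cliques of the prescribed sizes, and
all edges are added between cyclically consecutive cliques. -/
def cliqueExpansion (p : ℕ) [NeZero p] (k : Fin p → ℕ) : SimpleGraph (Σ i : Fin p, Fin (k i)) where
  Adj a b := a ≠ b ∧ (a.1 = b.1 ∨ a.1 + 1 = b.1 ∨ b.1 + 1 = a.1)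
  symm := by
    constructor
    rintro a b ⟨h, h'⟩
    refine ⟨h.symm, ?_⟩
    rcases h' with h' | h' | h'
    · exact Or.inl h'.symm
    · exact Or.inr (Or.inr h')
    · exact Or.inr (Or.inl h')
  loopless := by
    constructor
    rintro a ⟨h, _⟩
    exact h rfl

/-- The join `G ⊕ H` of two graphs: disjoint union plus all edges in between. -/
def joinG {α β : Type*} (G : SimpleGraph α) (H : SimpleGraph β) : SimpleGraph (α ⊕ β) where
  Adj x y :=
    match x, y with
    | Sum.inl a, Sum.inl b => G.Adj a b
    | Sum.inr a, Sum.inr b => H.Adj a b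
    | _, _ => True
  symm := by
    constructor
    rintro (a | a) (b | b) h
    · exact G.symm.symm _ _ h
    · trivial
    · trivial
    · exact H.symm.symm _ _ h
  loopless := by
    constructor
    rintro (a | a) h
    · exact G.loopless.irrefl a h
    · exact H.loopless.irrefl a h

/-- The bull: a triangle with two pendant edges. -/
def bull : SimpleGraph (Fin 5) :=
  SimpleGraph.fromRel (fun a b =>
    (a = 0 ∧ b = 1) ∨ (a = 1 ∧ b = 2) ∨ (a = 2 ∧ b = 3) ∨ (a = 3 ∧ b = 4) ∨ (a = 1 ∧ b = 3))

/-- The claw `K_{1,3}`. -/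
def claw : SimpleGraph (Fin 4) :=
  SimpleGraph.fromRel (fun a b => a = 0 ∧ b ≠ 0)

/-- The chair: the claw with one edge subdivided once. -/
def chair : SimpleGraph (Fin 5) :=
  SimpleGraph.fromRel (fun a b =>
    (a = 0 ∧ b = 1) ∨ (a = 0 ∧ b = 2) ∨ (a = 0 ∧ b = 3) ∨ (a = 3 ∧ b = 4))

/-- `G` contains `H` as a (not necessarily induced) subgraph. -/
def ContainsSub {V W : Type*} (G : SimpleGraph V) (H : SimpleGraph W) : Prop :=
  ∃ f : H →g G, Function.Injective f

/-- The independence number of a finite graph. -/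
noncomputable def indepNum {V : Type*} [Fintype V] (G : SimpleGraph V) : ℕ :=
  sSup {n | ∃ s : Finset V, s.card = n ∧ ∀ a ∈ s, ∀ b ∈ s, a ≠ b → ¬ G.Adj a b}

/-- Clique sizes of the spindle graph `M_{3i+1} = C_{2i+1}[2,1,2,1,…,2,1,1]`. -/
def spindleKs (i : ℕ) : Fin (2 * i + 1) → ℕ :=
  fun j => if j.val % 2 = 0 ∧ j.val < 2 * i then 2 else 1

/-- Clique sizes `[2,…,2,1,3,1,3,1,…,3,1]`: `a` copies of `2`, then a `1`,
then alternating `3,1`-pairs up to length `p`. -/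
def patternKs (p a : ℕ) : Fin p → ℕ :=
  fun j => if j.val < a then 2 else if (j.val - a) % 2 = 0 then 1 else 3

open Fin.NatCast Fin.CommRing

lemma CE18.one_ne_zero' {p : ℕ} [NeZero p] (hp : 7 ≤ p) : (1 : Fin p) ≠ 0 := by
  intro h
  have := congrArg Fin.val h
  rw [Fin.val_one', Nat.mod_eq_of_lt (by omega)] at this
  have hz : ((0 : Fin p)).val = 0 := Fin.val_zero p
  omega

lemma CE18.self_ne_succ {p : ℕ} [NeZero p] (hp : 7 ≤ p) (i : Fin p) : i ≠ i + 1 := by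
  intro h
  apply CE18.one_ne_zero' hp
  have : i + 1 = i + 0 := by rw [add_zero]; exact h.symm
  exact add_left_cancel this

lemma CE18.sigma_snd_eq {p : ℕ} [NeZero p] {k : Fin p → ℕ} {x : Fin p} {a b : Fin (k x)}
    (h : (⟨x, a⟩ : Σ i, Fin (k i)) = ⟨x, b⟩) : a = b :=
  eq_of_heq (Sigma.mk.inj_iff.mp h).2

lemma CE18.k5_of {p : ℕ} [NeZero p] (hp : 7 ≤ p) (ks : Fin p → ℕ) (i : Fin p)
    (h5 : 5 ≤ ks i + ks (i + 1)) :
    ContainsSub (cliqueExpansion p ks) (⊤ : SimpleGraph (Fin 5)) := by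
  classical
  set f : Fin 5 → (Σ i : Fin p, Fin (ks i)) := fun j =>
    if h : j.val < ks i then ⟨i, ⟨j.val, h⟩⟩
    else ⟨i + 1, ⟨j.val - ks i, by omega⟩⟩ with hf
  have hmap : ∀ a b : Fin 5, a ≠ b → (cliqueExpansion p ks).Adj (f a) (f b) := by
    intro a b hab
    have hvne : a.val ≠ b.val := fun h => hab (Fin.ext h)
    by_cases ha : a.val < ks i <;> by_cases hb : b.val < ks i
    · refine ⟨?_, Or.inl (by simp [hf, ha, hb])⟩
      simp only [hf, ha, hb, dif_pos]
      intro h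
      have h2 := congrArg Fin.val (CE18.sigma_snd_eq h)
      exact hvne h2
    · refine ⟨?_, Or.inr (Or.inl (by simp [hf, ha, hb]))⟩
      simp only [hf, ha, hb, dif_pos, dif_neg, not_false_iff]
      intro h
      exact CE18.self_ne_succ hp i (congrArg Sigma.fst h)
    · refine ⟨?_, Or.inr (Or.inr (by simp [hf, ha, hb]))⟩
      simp only [hf, ha, hb, dif_pos, dif_neg, not_false_iff]
      intro h
      exact CE18.self_ne_succ hp i (congrArg Sigma.fst h).symm
    · refine ⟨?_, Or.inl (by simp [hf, ha, hb])⟩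
      simp only [hf, ha, hb, dif_neg, not_false_iff]
      intro h
      have h2 := congrArg Fin.val (CE18.sigma_snd_eq h)
      simp only at h2
      omega
  refine ⟨⟨f, ?_⟩, ?_⟩
  · intro a b hab
    exact hmap a b ((SimpleGraph.top_adj a b).mp hab)
  · intro a b hfab
    by_contra hne
    have h2 := hmap a b hne
    have hfab' : f a = f b := hfab
    rw [hfab'] at h2
    exact (cliqueExpansion p ks).loopless.irrefl _ h2

lemma CE18.dominate_containsSub {p : ℕ} [NeZero p] (ks : Fin p → ℕ) (a : ℕ) (t₀ : Fin p)
    (hdom : ∀ j, patternKs p a j ≤ ks (t₀ + j)) :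
    ContainsSub (cliqueExpansion p ks) (cliqueExpansion p (patternKs p a)) := by
  set f : (Σ j : Fin p, Fin (patternKs p a j)) → (Σ i : Fin p, Fin (ks i)) := fun v =>
    ⟨t₀ + v.1, ⟨v.2.val, lt_of_lt_of_le v.2.isLt (hdom v.1)⟩⟩ with hf
  have hinj : Function.Injective f := by
    rintro ⟨j1, m1⟩ ⟨j2, m2⟩ h
    have hfst : t₀ + j1 = t₀ + j2 := congrArg Sigma.fst h
    have hj : j1 = j2 := add_left_cancel hfst
    subst hj
    have hsnd := congrArg Fin.val (CE18.sigma_snd_eq h)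
    simp only at hsnd
    simp only [Sigma.mk.inj_iff, heq_eq_eq, true_and]
    exact Fin.ext hsnd
  refine ⟨⟨f, ?_⟩, hinj⟩
  rintro ⟨j1, m1⟩ ⟨j2, m2⟩ ⟨hne, hor⟩
  refine ⟨fun h => hne (hinj h), ?_⟩
  rcases hor with h | h | h
  · replace h : j1 = j2 := h
    exact Or.inl (congrArg (t₀ + ·) h)
  · replace h : j1 + 1 = j2 := h
    refine Or.inr (Or.inl ?_)
    show (t₀ + j1) + 1 = t₀ + j2
    rw [add_assoc, h]
  · replace h : j2 + 1 = j1 := h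
    refine Or.inr (Or.inr ?_)
    show (t₀ + j2) + 1 = t₀ + j1
    rw [add_assoc, h]

lemma CE18.four_colorable {p : ℕ} [NeZero p] (hp : 7 ≤ p)
    (ks : Fin p → ℕ) (h1 : ∀ i, 1 ≤ ks i) (h4 : ∀ i, ks i + ks (i + 1) ≤ 4)
    (hS : ∑ i, ks i ≤ 2 * p - 2) : (cliqueExpansion p ks).Colorable 4 := by
  have hp0 : 0 < p := by omega
  set K : ℕ → ℕ := fun n => ks ⟨n % p, Nat.mod_lt n hp0⟩ with hK
  have hKi : ∀ i : Fin p, K i.val = ks i := by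
    intro i
    simp only [hK]
    congr 1
    exact Fin.ext (Nat.mod_eq_of_lt i.isLt)
  have h1p : 1 % p = 1 := Nat.mod_eq_of_lt (by omega)
  have hsucc : ∀ n : ℕ, (⟨n % p, Nat.mod_lt n hp0⟩ : Fin p) + 1 = ⟨(n+1) % p, Nat.mod_lt _ hp0⟩ := by
    intro n
    apply Fin.ext
    rw [Fin.val_add, Fin.val_one', h1p]
    simp only
    rw [Nat.add_mod n 1 p, h1p]
  have hK4 : ∀ n, K n + K (n+1) ≤ 4 := by
    intro n
    have := h4 ⟨n % p, Nat.mod_lt n hp0⟩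
    rw [hsucc n] at this
    exact this
  have hks3 : ∀ i, ks i ≤ 3 := fun i => by have := h4 i; have := h1 (i+1); omega
  set S := ∑ i : Fin p, ks i with hSdef
  have hKS : ∑ n ∈ Finset.range p, K n = S := by
    calc ∑ n ∈ Finset.range p, K n = ∑ i : Fin p, K i.val := (Fin.sum_univ_eq_sum_range K p).symm
      _ = S := Finset.sum_congr rfl (fun i _ => hKi i)
  have hKp0 : K p = K 0 := by
    simp only [hK]
    congr 1
    exact Fin.ext (by simp)
  have hshift : ∑ n ∈ Finset.range p, K (n+1) = S := by
    have e1 := Finset.sum_range_succ K p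
    have e2 := Finset.sum_range_succ' K p
    omega
  set c : ℕ → ℕ := fun n => 4 - K n - K (n+1) with hc
  have hcsum : (∑ n ∈ Finset.range p, c n) + S + S = 4 * p := by
    have e : ∑ n ∈ Finset.range p, (c n + (K n + K (n+1))) = ∑ _n ∈ Finset.range p, 4 :=
      Finset.sum_congr rfl (fun n _ => by have := hK4 n; simp only [hc]; omega)
    rw [Finset.sum_add_distrib, Finset.sum_add_distrib, hKS, hshift, Finset.sum_const,
      Finset.card_range, smul_eq_mul] at e
    omega
  set E := 3 - (S + 3) % 4 with hE
  have hES : (S + E) % 4 = 0 := by omega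
  have hcE : E ≤ ∑ n ∈ Finset.range p, c n := by omega
  set F : ℕ → ℕ := fun n => min (∑ j ∈ Finset.range n, c j) E with hF
  set s : ℕ → ℕ := fun n => (∑ j ∈ Finset.range n, K j) + F n with hs
  have hs_lo : ∀ n, s n + K n ≤ s (n+1) := by
    intro n
    simp only [hs, hF]
    rw [Finset.sum_range_succ K n, Finset.sum_range_succ c n]
    omega
  have hs_hi : ∀ n, s (n+1) + K (n+1) ≤ s n + 4 := by
    intro n
    have hcn : c n + (K n + K (n+1)) = 4 := by have := hK4 n; simp only [hc]; omega
    simp only [hs, hF]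
    rw [Finset.sum_range_succ K n, Finset.sum_range_succ c n]
    omega
  have hsp : s p % 4 = 0 := by
    have hFp : F p = E := by
      simp only [hF]
      exact min_eq_right hcE
    simp only [hs]
    rw [hFp, hKS]
    exact hES
  have hs0 : s 0 = 0 := by simp [hs, hF]
  refine ⟨SimpleGraph.Coloring.mk
    (fun v => (⟨(s v.1.val + v.2.val) % 4, Nat.mod_lt _ (by norm_num)⟩ : Fin 4)) ?_⟩
  intro v w hadj
  obtain ⟨i, x⟩ := v
  obtain ⟨i', x'⟩ := w
  obtain ⟨hne, hor⟩ := hadj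
  intro hCeq
  have hC : (s i.val + x.val) % 4 = (s i'.val + x'.val) % 4 := congrArg Fin.val hCeq
  have main : ∀ (i1 i2 : Fin p) (y1 : Fin (ks i1)) (y2 : Fin (ks i2)), i1 + 1 = i2 →
      (s i1.val + y1.val) % 4 = (s i2.val + y2.val) % 4 → False := by
    intro i1 i2 y1 y2 hstep hCe
    have hval : i2.val = (i1.val + 1) % p := by
      rw [← hstep, Fin.val_add, Fin.val_one', h1p]
    have hx1 : y1.val < K i1.val := by rw [hKi]; exact y1.isLt
    by_cases hlt : i1.val + 1 < p
    · have hv2 : i2.val = i1.val + 1 := by rw [hval, Nat.mod_eq_of_lt hlt]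
      have hx2 : y2.val < K (i1.val + 1) := by rw [← hv2, hKi]; exact y2.isLt
      have l1 := hs_lo i1.val
      have l2 := hs_hi i1.val
      rw [hv2] at hCe
      omega
    · have hpl : i1.val + 1 = p := by have := i1.isLt; omega
      have hv2 : i2.val = 0 := by rw [hval, hpl, Nat.mod_self]
      have hx2 : y2.val < K 0 := by rw [← hv2, hKi]; exact y2.isLt
      have l1 := hs_lo i1.val
      have l2 := hs_hi i1.val
      rw [hpl] at l1 l2
      rw [hv2, hs0] at hCe
      omega
  rcases hor with h | h | h
  · replace h : i = i' := h
    subst h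
    have hxx : x.val ≠ x'.val := by
      intro hv
      exact hne (by rw [Sigma.mk.inj_iff]; exact ⟨rfl, heq_of_eq (Fin.ext hv)⟩)
    have hk3 : ks i ≤ 3 := hks3 i
    have hb1 : x.val < ks i := x.isLt
    have hb2 : x'.val < ks i := x'.isLt
    omega
  · exact main i i' x x' h hC
  · exact main i' i x' x h hC.symm

lemma CE18.val_two {p : ℕ} [NeZero p] (hp : 7 ≤ p) : ((2 : Fin p)).val = 2 := by
  rw [show (2 : Fin p) = ((2 : ℕ) : Fin p) by norm_cast, Fin.val_natCast]
  exact Nat.mod_eq_of_lt (by omega)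

lemma CE18.two_mul_eq_zero {p : ℕ} [NeZero p] (hp : 7 ≤ p) (hodd : Odd p) {x : Fin p}
    (h : 2 * x = 0) : x = 0 := by
  have hv : (2 * x).val = 0 := by rw [h]; exact Fin.val_zero p
  rw [Fin.val_mul, CE18.val_two hp] at hv
  have hdvd : p ∣ x.val * 2 := by
    rw [mul_comm]
    exact Nat.dvd_of_mod_eq_zero hv
  have hcop : Nat.Coprime p 2 := Nat.coprime_two_right.mpr hodd
  have hdvd2 := Nat.Coprime.dvd_of_dvd_mul_right hcop hdvd
  have hlt := x.isLt
  have hx0 : x.val = 0 := by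
    rcases Nat.eq_zero_or_pos x.val with h0 | hpos
    · exact h0
    · exact absurd (Nat.le_of_dvd hpos hdvd2) (by omega)
  have hz : ((0 : Fin p)).val = 0 := Fin.val_zero p
  apply Fin.ext
  omega

lemma CE18.two_mul_cancel {p : ℕ} [NeZero p] (hp : 7 ≤ p) (hodd : Odd p) {x y : Fin p}
    (h : 2 * x = 2 * y) : x = y := by
  have h0 : 2 * (x - y) = 0 := by rw [mul_sub, h, sub_self]
  have := CE18.two_mul_eq_zero hp hodd h0
  exact sub_eq_zero.mp this

lemma CE18.natCast_inj_lt {p : ℕ} [NeZero p] {m n : ℕ} (hm : m < p) (hn : n < p)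
    (h : (m : Fin p) = (n : Fin p)) : m = n := by
  have := congrArg Fin.val h
  rw [Fin.val_natCast, Fin.val_natCast, Nat.mod_eq_of_lt hm, Nat.mod_eq_of_lt hn] at this
  exact this

lemma CE18.exists_cast_two_mul {p : ℕ} [NeZero p] (hp : 7 ≤ p) (hodd : Odd p) (y : Fin p) :
    ∃ m : ℕ, m < p ∧ 2 * (m : Fin p) = y := by
  have hsurj : Function.Surjective (fun x : Fin p => 2 * x) :=
    Finite.surjective_of_injective (fun a b hab => CE18.two_mul_cancel hp hodd hab)
  obtain ⟨z, hz⟩ := hsurj y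
  exact ⟨z.val, z.isLt, by rw [Fin.cast_val_eq_self]; exact hz⟩

lemma CE18.first_exit (Q : ℕ → Prop) [DecidablePred Q] (m : ℕ) (h0 : Q 0) (hm : ¬ Q m) :
    ∃ t, (∀ v ≤ t, Q v) ∧ ¬ Q (t + 1) := by
  classical
  have hex : ∃ n, ¬ Q n := ⟨m, hm⟩
  have hspec := Nat.find_spec hex
  have hpos : 0 < Nat.find hex := by
    rcases Nat.eq_zero_or_pos (Nat.find hex) with h | h
    · rw [h] at hspec; exact absurd h0 hspec
    · exact h
  refine ⟨Nat.find hex - 1, ?_, ?_⟩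
  · intro v hv
    have hvlt : v < Nat.find hex := by omega
    exact not_not.mp (Nat.find_min hex hvlt)
  · rw [show Nat.find hex - 1 + 1 = Nat.find hex by omega]
    exact hspec

lemma CE18.structure_dominates {p : ℕ} [NeZero p] (hp : 7 ≤ p) (hodd : Odd p)
    (ks : Fin p → ℕ) (h1 : ∀ i, 1 ≤ ks i) (h4 : ∀ i, ks i + ks (i + 1) ≤ 4)
    (hS : 2 * p - 1 ≤ ∑ i, ks i) :
    ∃ a b : ℕ, ∃ t₀ : Fin p, a + 2 * b = p - 1 ∧
      ∀ j : Fin p, patternKs p a j ≤ ks (t₀ + j) := by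
  classical
  have hub : ∀ i, ks i ≤ 3 := fun i => by have := h4 i; have := h1 (i+1); omega
  have step1a : ∀ i : Fin p, ks i = 3 → ks (i + 1) = 1 := fun i h3 => by
    have := h4 i; have := h1 (i+1); omega
  have step1b : ∀ i : Fin p, ks i = 3 → ks (i - 1) = 1 := fun i h3 => by
    have h4' := h4 (i - 1)
    rw [sub_add_cancel] at h4'
    have := h1 (i - 1); omega
  set A : Finset (Fin p) := univ.filter (fun i => ks i = 3) with hA
  set B : Finset (Fin p) := univ.filter (fun i => ks i = 1) with hB
  have hmA : ∀ i, i ∈ A ↔ ks i = 3 := fun i => by simp [hA]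
  have hmB : ∀ i, i ∈ B ↔ ks i = 1 := fun i => by simp [hB]
  have h1p : 1 % p = 1 := Nat.mod_eq_of_lt (by omega)
  -- counting
  have hcardsum : (∑ i, ks i) + B.card = 2 * p + A.card := by
    have hAc : A.card = ∑ i : Fin p, (if ks i = 3 then 1 else 0) := by
      rw [hA, Finset.card_filter]
    have hBc : B.card = ∑ i : Fin p, (if ks i = 1 then 1 else 0) := by
      rw [hB, Finset.card_filter]
    have lhs : (∑ i, ks i) + ∑ i : Fin p, (if ks i = 1 then 1 else 0)
        = ∑ i : Fin p, (2 + (if ks i = 3 then 1 else 0)) := by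
      rw [← Finset.sum_add_distrib]
      exact Finset.sum_congr rfl (fun i _ => by have := h1 i; have := hub i; split_ifs <;> omega)
    have rhs : ∑ i : Fin p, (2 + (if ks i = 3 then 1 else 0))
        = 2 * p + ∑ i : Fin p, (if ks i = 3 then 1 else 0) := by
      rw [Finset.sum_add_distrib, Finset.sum_const, Finset.card_univ, Fintype.card_fin,
        smul_eq_mul, mul_comm]
    rw [hBc, hAc, lhs, rhs]
  have hBA : B.card ≤ A.card + 1 := by omega
  by_cases hAne : A.Nonempty
  case neg =>
    -- no 3s
    have hAemp : A = ∅ := Finset.not_nonempty_iff_eq_empty.mp hAne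
    have hnot3 : ∀ i, ks i ≠ 3 := fun i h =>
      Finset.notMem_empty i (hAemp ▸ (hmA i).mpr h)
    have hB1 : B.card ≤ 1 := by rw [hAemp] at hcardsum; simp at hcardsum; omega
    have hpatlast : ∀ j : Fin p, ¬ j.val < p - 1 → patternKs p (p - 1) j = 1 := by
      intro j hj
      have hjv : j.val = p - 1 := by have := j.isLt; omega
      simp only [patternKs, hjv]
      norm_num
    by_cases hBne : B.Nonempty
    · obtain ⟨q, hq⟩ := hBne
      have hBq : ∀ x ∈ B, x = q := fun x hx => Finset.card_le_one.mp hB1 x hx q hq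
      refine ⟨p - 1, 0, q + 1, by omega, ?_⟩
      intro j
      by_cases hj : j.val < p - 1
      · have hpat : patternKs p (p - 1) j = 2 := by simp [patternKs, hj]
        rw [hpat]
        have hne : q + 1 + j ≠ q := by
          intro h
          have h0 : q + (1 + j) = q + 0 := by rw [add_zero, ← add_assoc]; exact h
          have h1j : 1 + j = 0 := add_left_cancel h0
          have hval := congrArg Fin.val h1j
          rw [Fin.val_add, Fin.val_one', h1p] at hval
          have hz : ((0 : Fin p)).val = 0 := Fin.val_zero p
          rw [Nat.mod_eq_of_lt (by have := j.isLt; omega)] at hval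
          omega
        have hnB : q + 1 + j ∉ B := fun hmem => hne (hBq _ hmem)
        have : ks (q + 1 + j) ≠ 1 := fun h => hnB ((hmB _).mpr h)
        have := h1 (q + 1 + j)
        have := hnot3 (q + 1 + j)
        omega
      · rw [hpatlast j hj]; exact h1 _
    · have hBemp : B = ∅ := Finset.not_nonempty_iff_eq_empty.mp hBne
      refine ⟨p - 1, 0, 0, by omega, ?_⟩
      intro j
      by_cases hj : j.val < p - 1
      · have hpat : patternKs p (p - 1) j = 2 := by simp [patternKs, hj]
        rw [hpat]
        have hnB : (0 : Fin p) + j ∉ B := by rw [hBemp]; exact Finset.notMem_empty _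
        have : ks (0 + j) ≠ 1 := fun h => hnB ((hmB _).mpr h)
        have := h1 (0 + j)
        have := hnot3 (0 + j)
        omega
      · rw [hpatlast j hj]; exact h1 _
  case pos =>
  -- A nonempty
  set r := A.card with hr
  have hApos : 0 < r := Finset.card_pos.mpr hAne
  have hAlt : r < p := by
    obtain ⟨x, hx⟩ := hAne
    have hx1 : x + 1 ∉ A := by
      intro h
      have h3 := (hmA _).mp h
      have := step1a x ((hmA x).mp hx)
      omega
    have hssub : A ⊂ univ := Finset.ssubset_univ_iff.mpr (fun h => hx1 (h ▸ Finset.mem_univ _))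
    have := Finset.card_lt_card hssub
    rwa [Finset.card_univ, Fintype.card_fin] at this
  have hinj2 : ∀ {x : Fin p} {t1 t2 : ℕ}, t1 < p → t2 < p →
      x - 2*((t1:ℕ):Fin p) = x - 2*((t2:ℕ):Fin p) → t1 = t2 := by
    intro x t1 t2 ht1 ht2 h
    have h2 : 2 * ((t1:ℕ):Fin p) = 2 * ((t2:ℕ):Fin p) := sub_right_injective h
    exact CE18.natCast_inj_lt ht1 ht2 (CE18.two_mul_cancel hp hodd h2)
  -- E' and exits/entries
  set E' : Finset (Fin p) := A.filter (fun i => i + 2 ∈ A) with hE'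
  have hE'ge : E'.card + 1 ≥ r := by
    set φA := A.image (fun i => i + 1) with hφ
    set ψA := A.image (fun i => i - 1) with hψ
    have hφB : φA ⊆ B := by
      intro j hj
      obtain ⟨i, hi, rfl⟩ := Finset.mem_image.mp hj
      exact (hmB _).mpr (step1a i ((hmA i).mp hi))
    have hψB : ψA ⊆ B := by
      intro j hj
      obtain ⟨i, hi, rfl⟩ := Finset.mem_image.mp hj
      exact (hmB _).mpr (step1b i ((hmA i).mp hi))
    have hφc : φA.card = r := Finset.card_image_of_injective _ (fun x y h => by
      exact add_left_injective 1 h)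
    have hψc : ψA.card = r := Finset.card_image_of_injective _ (fun x y h => by
      exact sub_left_injective h)
    have hunion : (φA ∪ ψA).card ≤ r + 1 :=
      le_trans (Finset.card_le_card (Finset.union_subset hφB hψB)) hBA
    have hintersub : φA ∩ ψA ⊆ E'.image (fun i => i + 1) := by
      intro j hj
      obtain ⟨hjφ, hjψ⟩ := Finset.mem_inter.mp hj
      obtain ⟨i1, hi1, hE1⟩ := Finset.mem_image.mp hjφ
      obtain ⟨i2, hi2, hE2⟩ := Finset.mem_image.mp hjψ
      refine Finset.mem_image.mpr ⟨i1, Finset.mem_filter.mpr ⟨hi1, ?_⟩, hE1⟩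
      have hi2eq : i2 = i1 + 2 := by
        have : i2 = j + 1 := by rw [← hE2]; ring
        rw [this, ← hE1]; ring
      rwa [← hi2eq]
    have hinter : (φA ∩ ψA).card ≤ E'.card :=
      le_trans (Finset.card_le_card hintersub) (Finset.card_image_le)
    have := Finset.card_union_add_card_inter φA ψA
    omega
  have hexits : (A.filter (fun i => ¬ (i + 2 ∈ A))).card ≤ 1 := by
    have hthis := Finset.card_filter_add_card_filter_not (s := A) (p := fun i => i + 2 ∈ A)
    rw [← hE'] at hthis
    omega
  have hE''ge : (A.filter (fun i => i - 2 ∈ A)).card ≥ r - 1 := by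
    have hsub : E'.image (fun i => i + 2) ⊆ A.filter (fun i => i - 2 ∈ A) := by
      intro j hj
      obtain ⟨i, hi, rfl⟩ := Finset.mem_image.mp hj
      obtain ⟨hiA, hi2A⟩ := Finset.mem_filter.mp hi
      refine Finset.mem_filter.mpr ⟨hi2A, ?_⟩
      have : i + 2 - 2 = i := by ring
      rwa [this]
    have himg : (E'.image (fun i => i + 2)).card = E'.card :=
      Finset.card_image_of_injective _ (fun x y h => add_left_injective 2 h)
    have := Finset.card_le_card hsub
    omega
  have hentries : (A.filter (fun i => ¬ (i - 2 ∈ A))).card ≤ 1 := by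
    have := Finset.card_filter_add_card_filter_not (s := A) (p := fun i => i - 2 ∈ A)
    omega
  have huniq_entries : ∀ x ∈ (A.filter (fun i => ¬ (i - 2 ∈ A))),
      ∀ y ∈ (A.filter (fun i => ¬ (i - 2 ∈ A))), x = y :=
    Finset.card_le_one.mp hentries
  -- existence of an exit
  obtain ⟨i₀, hi₀A, hi₀exit⟩ : ∃ i₀, i₀ ∈ A ∧ i₀ + 2 ∉ A := by
    obtain ⟨x, hx⟩ := hAne
    have hyA : x + 1 ∉ A := by
      intro h
      have := (hmA _).mp h
      have := step1a x ((hmA x).mp hx)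
      omega
    obtain ⟨m, hm, h2m⟩ := CE18.exists_cast_two_mul hp hodd ((x + 1) - x)
    have hQ0 : x + 2*((0:ℕ):Fin p) ∈ A := by
      simpa using hx
    have hQm : ¬ (x + 2*((m:ℕ):Fin p) ∈ A) := by
      have : x + 2*((m:ℕ):Fin p) = x + 1 := by rw [h2m]; ring
      rw [this]; exact hyA
    obtain ⟨t, hQt, hQt1⟩ := CE18.first_exit (fun v => x + 2*((v:ℕ):Fin p) ∈ A) m hQ0 hQm
    refine ⟨x + 2*((t:ℕ):Fin p), hQt t le_rfl, ?_⟩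
    have : x + 2*((t:ℕ):Fin p) + 2 = x + 2*(((t+1:ℕ)):Fin p) := by push_cast; ring
    rw [this]; exact hQt1
  have huniq_exit : ∀ i ∈ A, i + 2 ∉ A → i = i₀ := by
    intro i hi hi2
    have h1' : i ∈ A.filter (fun i => ¬ (i + 2 ∈ A)) := Finset.mem_filter.mpr ⟨hi, hi2⟩
    have h2' : i₀ ∈ A.filter (fun i => ¬ (i + 2 ∈ A)) := Finset.mem_filter.mpr ⟨hi₀A, hi₀exit⟩
    exact Finset.card_le_one.mp hexits i h1' i₀ h2'
  -- chain
  have key : ∀ t, t < r → ∀ s, s ≤ t → i₀ - 2*((s:ℕ):Fin p) ∈ A := by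
    intro t
    induction t with
    | zero =>
      intro _ s hs
      have : s = 0 := by omega
      subst this
      simpa using hi₀A
    | succ n ih =>
      intro hn1 s hs
      rcases Nat.lt_or_ge s (n+1) with hlt | hge
      · exact ih (by omega) s (by omega)
      · have hs' : s = n + 1 := by omega
        subst hs'
        by_contra hnot
        have hprev : i₀ - 2*((n:ℕ):Fin p) ∈ A := ih (by omega) n le_rfl
        have hent1 : i₀ - 2*((n:ℕ):Fin p) ∈ A.filter (fun i => ¬ (i - 2 ∈ A)) := by
          refine Finset.mem_filter.mpr ⟨hprev, ?_⟩
          have heq2 : i₀ - 2*((n:ℕ):Fin p) - 2 = i₀ - 2*(((n+1:ℕ)):Fin p) := by push_cast; ring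
          rw [heq2]; exact hnot
        set W := (Finset.range (n+1)).image (fun s => i₀ - 2*((s:ℕ):Fin p)) with hW
        have hWsub : W ⊆ A := by
          intro w hw
          obtain ⟨s', hs', rfl⟩ := Finset.mem_image.mp hw
          rw [Finset.mem_range] at hs'
          exact ih (by omega) s' (by omega)
        have hWcard : W.card = n + 1 := by
          rw [hW, Finset.card_image_of_injOn, Finset.card_range]
          intro a ha b hb hab
          rw [Finset.mem_coe, Finset.mem_range] at ha hb
          exact hinj2 (by omega) (by omega) hab
        have hltc : W.card < A.card := by omega
        have hnsub : ¬ (A ⊆ W) := fun hsub => by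
          have := Finset.card_le_card hsub; omega
        obtain ⟨j, hjA, hjW⟩ := Finset.not_subset.mp hnsub
        obtain ⟨m', hm', h2m'⟩ := CE18.exists_cast_two_mul hp hodd (j - (i₀ + 2))
        have hQ0 : j - 2*((0:ℕ):Fin p) ∈ A := by simpa using hjA
        have hQm : ¬ (j - 2*((m':ℕ):Fin p) ∈ A) := by
          have : j - 2*((m':ℕ):Fin p) = i₀ + 2 := by rw [h2m']; ring
          rw [this]; exact hi₀exit
        obtain ⟨u, hQu, hQu1⟩ := CE18.first_exit (fun v => j - 2*((v:ℕ):Fin p) ∈ A) m' hQ0 hQm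
        have hentu : j - 2*((u:ℕ):Fin p) ∈ A.filter (fun i => ¬ (i - 2 ∈ A)) := by
          refine Finset.mem_filter.mpr ⟨hQu u le_rfl, ?_⟩
          have heq2 : j - 2*((u:ℕ):Fin p) - 2 = j - 2*(((u+1:ℕ)):Fin p) := by push_cast; ring
          rw [heq2]; exact hQu1
        have heqe : j - 2*((u:ℕ):Fin p) = i₀ - 2*((n:ℕ):Fin p) :=
          huniq_entries _ hentu _ hent1
        have hj : j = i₀ - 2*((n:ℕ):Fin p) + 2*((u:ℕ):Fin p) := by
          have := sub_eq_iff_eq_add.mp heqe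
          rw [this]
        rcases le_or_gt u n with hun | hun
        · apply hjW
          rw [hW]
          refine Finset.mem_image.mpr ⟨n - u, Finset.mem_range.mpr (by omega), ?_⟩
          rw [hj]
          push_cast [Nat.cast_sub hun]
          ring
        · apply hi₀exit
          have hv := hQu (u - n - 1) (by omega)
          have heq3 : j - 2*(((u - n - 1:ℕ)):Fin p) = i₀ + 2 := by
            rw [hj]
            have : u - n - 1 = u - (n+1) := by omega
            rw [this]
            push_cast [Nat.cast_sub (show n + 1 ≤ u by omega)]
            ring
          rw [← heq3]; exact hv
  have hchainA : ∀ s, s < r → i₀ - 2*((s:ℕ):Fin p) ∈ A := fun s hs =>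
    key (r-1) (by omega) s (by omega)
  -- B is exactly the interleaved 1s
  set B' := (Finset.range (r+1)).image (fun t => i₀ + 1 - 2*((t:ℕ):Fin p)) with hB'
  have hB'sub : B' ⊆ B := by
    intro w hw
    obtain ⟨t, ht, rfl⟩ := Finset.mem_image.mp hw
    rw [Finset.mem_range] at ht
    rcases Nat.lt_or_ge t r with hlt | hge
    · have h3 := step1a _ ((hmA _).mp (hchainA t hlt))
      have heq : i₀ - 2*((t:ℕ):Fin p) + 1 = i₀ + 1 - 2*((t:ℕ):Fin p) := by ring
      rw [heq] at h3
      exact (hmB _).mpr h3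
    · have ht' : t = r := by omega
      subst ht'
      have h3 := step1b _ ((hmA _).mp (hchainA (r-1) (by omega)))
      have heq : i₀ - 2*(((r-1:ℕ)):Fin p) - 1 = i₀ + 1 - 2*((r:ℕ):Fin p) := by
        push_cast [Nat.cast_sub (show 1 ≤ r by omega)]
        ring
      rw [heq] at h3
      exact (hmB _).mpr h3
  have hB'card : B'.card = r + 1 := by
    rw [hB', Finset.card_image_of_injOn, Finset.card_range]
    intro a ha b hb hab
    rw [Finset.mem_coe, Finset.mem_range] at ha hb
    exact hinj2 (by omega) (by omega) hab
  have hBeq : B = B' := (Finset.eq_of_subset_of_card_le hB'sub (by omega)).symm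
  -- 2r + 1 ≤ p
  have hdisj : Disjoint A B := by
    rw [Finset.disjoint_left]
    intro x hxA hxB
    have := (hmA x).mp hxA
    have := (hmB x).mp hxB
    omega
  have h2r1 : 2 * r + 1 ≤ p := by
    have hcu : (A ∪ B).card = r + (r + 1) := by
      rw [Finset.card_union_of_disjoint hdisj, hBeq, hB'card]
    have hle := Finset.card_le_univ (A ∪ B)
    have hcf : Fintype.card (Fin p) = p := Fintype.card_fin p
    rw [hcu] at hle
    omega
  -- final construction
  refine ⟨p - 1 - 2*r, r, i₀ + 1 - 2*((r:ℕ):Fin p) - (((p - 1 - 2*r : ℕ)):Fin p), by omega, ?_⟩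
  set a := p - 1 - 2*r with ha
  set t₀ : Fin p := i₀ + 1 - 2*((r:ℕ):Fin p) - ((a:ℕ):Fin p) with ht₀
  intro j
  by_cases hj : j.val < a
  · have hpat : patternKs p a j = 2 := by simp [patternKs, hj]
    rw [hpat]
    by_contra hlt
    have hks1 : ks (t₀ + j) = 1 := by have := h1 (t₀ + j); omega
    have hmem : t₀ + j ∈ B' := by rw [← hBeq]; exact (hmB _).mpr hks1
    obtain ⟨t, ht, heq⟩ := Finset.mem_image.mp hmem
    rw [Finset.mem_range] at ht
    have hjeq : (j : Fin p) = ((a + 2*(r - t) : ℕ) : Fin p) := by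
      have hj1 : (j : Fin p) = i₀ + 1 - 2*((t:ℕ):Fin p) - t₀ := by
        rw [heq]; ring
      rw [hj1, ht₀]
      push_cast [Nat.cast_sub (show t ≤ r by omega)]
      ring
    have hjval : j.val = a + 2*(r - t) := by
      have hcv := congrArg Fin.val hjeq
      rw [Fin.val_natCast, Nat.mod_eq_of_lt (by omega)] at hcv
      exact hcv
    omega
  · by_cases hd2 : (j.val - a) % 2 = 0
    · have hpat : patternKs p a j = 1 := by simp [patternKs, hj, hd2]
      rw [hpat]; exact h1 _
    · have hpat : patternKs p a j = 3 := by simp [patternKs, hj, hd2]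
      rw [hpat]
      have hdle : j.val - a ≤ 2*r := by have := j.isLt; omega
      set t := (j.val - a - 1)/2 with htdef
      have htr : t < r := by omega
      have hjv : j.val = a + 2*t + 1 := by omega
      have hmem : t₀ + j ∈ A := by
        have hch := hchainA (r - 1 - t) (by omega)
        have heq : t₀ + j = i₀ - 2*(((r - 1 - t:ℕ)):Fin p) := by
          have hjcast : (j : Fin p) = ((a + 2*t + 1 : ℕ) : Fin p) := by
            conv_lhs => rw [← Fin.cast_val_eq_self j]
            exact congrArg _ hjv
          rw [ht₀, hjcast]
          have h1' : r - 1 - t = r - (1 + t) := by omega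
          rw [h1']
          push_cast [Nat.cast_sub (show 1 + t ≤ r by omega)]
          ring
        rw [heq]; exact hch
      have := (hmA _).mp hmem
      omega

theorem cliqueExpansion_fourColorable_cases (p : ℕ) [NeZero p] (hp : 7 ≤ p) (hodd : Odd p)
    (ks : Fin p → ℕ) (hks : ∀ i, 1 ≤ ks i) :
    ContainsSub (cliqueExpansion p ks) (⊤ : SimpleGraph (Fin 5)) ∨
    (∃ a b : ℕ, a + 2 * b = p - 1 ∧
      ContainsSub (cliqueExpansion p ks) (cliqueExpansion p (patternKs p a))) ∨
    (cliqueExpansion p ks).Colorable 4 := by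
  by_cases h5 : ∃ i : Fin p, 5 ≤ ks i + ks (i + 1)
  · obtain ⟨i, hi⟩ := h5
    exact Or.inl (CE18.k5_of hp ks i hi)
  · push_neg at h5
    have h4 : ∀ i, ks i + ks (i + 1) ≤ 4 := fun i => by have := h5 i; omega
    by_cases hS : ∑ i, ks i ≤ 2 * p - 2
    · exact Or.inr (Or.inr (CE18.four_colorable hp ks hks h4 hS))
    · obtain ⟨a, b, t₀, hab, hdom⟩ :=
        CE18.structure_dominates hp hodd ks hks h4 (by omega)
      exact Or.inr (Or.inl ⟨a, b, hab, CE18.dominate_containsSub ks a t₀ hdom⟩)
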